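/- If r₁ = r₂ = r₃ = r > r₄ = r₅ = s ≥ 0 are nonnegative integers, then ∑_{k≥0} 1/((k+r+1)³(k+s+1)²) = (1/(r-s)³)·(ζ(2) - ∑_{j=1}^{s} 1/j²) - (3/(r-s)⁴)·∑_{j=s+1}^{r} 1/j + (2/(r-s)³)·(ζ(2) - ∑_{j=1}^{r} 1/j²) + (1/(r-s)²)·(ζ(3) - ∑_{j=1}^{r} 1/j³). -/

import Mathlib

open Finset Filter Topology

lemma summable_shift_pow (p m : ℕ) (hp : 1 < p) :
    Summable (fun k : ℕ => 1 / ((k : ℝ) + m + 1) ^ p) := by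
  have h : Summable (fun n : ℕ => 1 / (n : ℝ) ^ p) :=
    Real.summable_one_div_nat_pow.2 hp
  have h2 := (summable_nat_add_iff (m + 1)).2 h
  refine h2.congr fun k => ?_
  push_cast
  ring_nf

lemma icc_sum_eq (m : ℕ) (f : ℕ → ℝ) :
    ∑ j ∈ Finset.Icc 1 m, f j = ∑ i ∈ Finset.range m, f (i + 1) := by
  rw [← Finset.Ico_add_one_right_eq_Icc, Finset.sum_Ico_eq_sum_range]
  simp [add_comm]

lemma tsum_shift_pow (p m : ℕ) (hp : 1 < p) :
    ∑' k : ℕ, 1 / ((k : ℝ) + m + 1) ^ p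
      = (∑' n : ℕ, 1 / ((n : ℝ) + 1) ^ p) - ∑ j ∈ Finset.Icc 1 m, 1 / (j : ℝ) ^ p := by
  have h : Summable (fun n : ℕ => 1 / ((n : ℝ) + 1) ^ p) := by
    have := summable_shift_pow p 0 hp
    refine this.congr fun k => by norm_num
  have key := h.sum_add_tsum_nat_add m
  have e1 : ∑' k : ℕ, 1 / ((k : ℝ) + m + 1) ^ p = ∑' k : ℕ, 1 / (((k + m : ℕ) : ℝ) + 1) ^ p := by
    refine tsum_congr fun k => ?_
    push_cast; ring_nf
  have e2 : ∑ j ∈ Finset.Icc 1 m, 1 / (j : ℝ) ^ p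
      = ∑ i ∈ Finset.range m, 1 / ((i : ℝ) + 1) ^ p := by
    rw [icc_sum_eq]; push_cast; rfl
  rw [e1, e2]
  linarith [key]

lemma summable_tel (r s : ℕ) (h : s < r) :
    Summable (fun k : ℕ => 1 / ((k : ℝ) + r + 1) - 1 / ((k : ℝ) + s + 1)) := by
  have hb : Summable (fun k : ℕ => ((r : ℝ) - s) * (1 / ((k : ℝ) + 1) ^ 2)) := by
    have := (summable_shift_pow 2 0 (by norm_num)).mul_left ((r : ℝ) - s)
    simpa using this
  rw [← summable_neg_iff]
  refine Summable.of_nonneg_of_le (fun k => ?_) (fun k => ?_) hb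
  · have h1 : (0:ℝ) < (k : ℝ) + s + 1 := by positivity
    have h2 : (k : ℝ) + s + 1 ≤ (k : ℝ) + r + 1 := by
      have : (s:ℝ) ≤ r := by exact_mod_cast h.le
      linarith
    simp only [neg_sub]
    have := one_div_le_one_div_of_le h1 h2
    linarith
  · have h1 : (0:ℝ) < (k : ℝ) + s + 1 := by positivity
    have h2 : (0:ℝ) < (k : ℝ) + r + 1 := by positivity
    have e : -(1 / ((k : ℝ) + r + 1) - 1 / ((k : ℝ) + s + 1))
        = ((r : ℝ) - s) / (((k : ℝ) + r + 1) * ((k : ℝ) + s + 1)) := by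
      field_simp
      ring
    rw [e]
    have hrs : (0:ℝ) ≤ (r : ℝ) - s := by
      have : (s:ℝ) ≤ r := by exact_mod_cast h.le
      linarith
    have hk1 : ((k : ℝ) + 1) ^ 2 ≤ ((k : ℝ) + r + 1) * ((k : ℝ) + s + 1) := by
      have hr0 : (0:ℝ) ≤ r := by positivity
      have hs0 : (0:ℝ) ≤ s := by positivity
      nlinarith [sq_nonneg ((k:ℝ)+1)]
    have hk2 : (0:ℝ) < ((k : ℝ) + 1) ^ 2 := by positivity
    calc ((r : ℝ) - s) / (((k : ℝ) + r + 1) * ((k : ℝ) + s + 1))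
        ≤ ((r : ℝ) - s) / ((k : ℝ) + 1) ^ 2 :=
          div_le_div_of_nonneg_left hrs hk2 hk1 |>.trans_eq rfl
      _ = ((r : ℝ) - s) * (1 / ((k : ℝ) + 1) ^ 2) := by ring

lemma tsum_tel (r s : ℕ) (h : s < r) :
    ∑' k : ℕ, (1 / ((k : ℝ) + r + 1) - 1 / ((k : ℝ) + s + 1))
      = -∑ j ∈ Finset.Icc (s + 1) r, 1 / (j : ℝ) := by
  set g : ℕ → ℝ := fun k => 1 / ((k : ℝ) + s + 1) with hg
  set t : ℕ := r - s with ht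
  have htr : t + s = r := Nat.sub_add_cancel h.le
  have hsum := summable_tel r s h
  have hps : ∀ n : ℕ, ∑ k ∈ Finset.range n, (1 / ((k : ℝ) + r + 1) - 1 / ((k : ℝ) + s + 1))
      = (∑ i ∈ Finset.range t, g (n + i)) - ∑ i ∈ Finset.range t, g i := by
    intro n
    have e1 : ∀ k : ℕ, 1 / ((k : ℝ) + r + 1) = g (t + k) := by
      intro k
      simp only [hg]
      congr 1
      push_cast [← htr]
      ring
    rw [Finset.sum_sub_distrib]
    simp only [e1]
    have e2 := Finset.sum_range_add g t n
    have e3 := Finset.sum_range_add g n t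
    have e23 : ∑ x ∈ Finset.range (t + n), g x = ∑ x ∈ Finset.range (n + t), g x := by
      rw [add_comm]
    have e5 : ∑ x ∈ Finset.range n, (1:ℝ) / ((x:ℝ) + s + 1) = ∑ x ∈ Finset.range n, g x := rfl
    rw [e5]
    linarith [e2, e3, e23]
  have hlim : Tendsto (fun n : ℕ => ∑ i ∈ Finset.range t, g (n + i)) atTop (𝓝 0) := by
    have h0 : (0:ℝ) = ∑ _i ∈ Finset.range t, (0:ℝ) := by simp
    rw [h0]
    refine tendsto_finset_sum _ fun i _ => ?_
    have hA : Tendsto (fun n : ℕ => ((n : ℝ) + i + s + 1)) atTop atTop := by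
      have := tendsto_natCast_atTop_atTop (R := ℝ)
      exact tendsto_atTop_add_const_right atTop _
        (tendsto_atTop_add_const_right atTop _ (tendsto_atTop_add_const_right atTop _ this))
    have := hA.inv_tendsto_atTop
    refine this.congr fun n => ?_
    simp only [Pi.inv_apply, hg]
    push_cast
    rw [one_div]
  have hHasSum : HasSum (fun k : ℕ => 1 / ((k : ℝ) + r + 1) - 1 / ((k : ℝ) + s + 1))
      (-∑ i ∈ Finset.range t, g i) := by
    rw [hsum.hasSum_iff_tendsto_nat]
    have := hlim.sub_const (∑ i ∈ Finset.range t, g i)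
    rw [zero_sub] at this
    exact this.congr fun n => (hps n).symm
  rw [hHasSum.tsum_eq]
  congr 1
  rw [← Finset.Ico_add_one_right_eq_Icc, Finset.sum_Ico_eq_sum_range]
  have : r + 1 - (s + 1) = t := by omega
  rw [this]
  refine Finset.sum_congr rfl fun i _ => ?_
  simp only [hg]
  push_cast
  ring_nf

theorem tsum_three_two (r s : ℕ) (h : s < r) :
    (∑' k : ℕ, 1 / (((k : ℝ) + r + 1) ^ 3 * ((k : ℝ) + s + 1) ^ 2)) =
      (1 / ((r : ℝ) - s) ^ 3) *
          ((∑' n : ℕ, 1 / ((n : ℝ) + 1) ^ 2) - ∑ j ∈ Finset.Icc 1 s, 1 / (j : ℝ) ^ 2)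
      - (3 / ((r : ℝ) - s) ^ 4) * (∑ j ∈ Finset.Icc (s + 1) r, 1 / (j : ℝ))
      + (2 / ((r : ℝ) - s) ^ 3) *
          ((∑' n : ℕ, 1 / ((n : ℝ) + 1) ^ 2) - ∑ j ∈ Finset.Icc 1 r, 1 / (j : ℝ) ^ 2)
      + (1 / ((r : ℝ) - s) ^ 2) *
          ((∑' n : ℕ, 1 / ((n : ℝ) + 1) ^ 3) - ∑ j ∈ Finset.Icc 1 r, 1 / (j : ℝ) ^ 3) := by
  have hd : (0:ℝ) < (r:ℝ) - s := by
    have : (s:ℝ) < r := by exact_mod_cast h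
    linarith
  have key : ∀ k : ℕ, 1 / (((k : ℝ) + r + 1) ^ 3 * ((k : ℝ) + s + 1) ^ 2)
      = (3 / ((r:ℝ)-s)^4) * (1 / ((k : ℝ) + r + 1) - 1 / ((k : ℝ) + s + 1))
      + (2 / ((r:ℝ)-s)^3) * (1 / ((k : ℝ) + r + 1) ^ 2)
      + (1 / ((r:ℝ)-s)^2) * (1 / ((k : ℝ) + r + 1) ^ 3)
      + (1 / ((r:ℝ)-s)^3) * (1 / ((k : ℝ) + s + 1) ^ 2) := by
    intro k
    have ha : ((k : ℝ) + r + 1) ≠ 0 := by positivity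
    have hb : ((k : ℝ) + s + 1) ≠ 0 := by positivity
    have hdne : ((r:ℝ) - s) ≠ 0 := ne_of_gt hd
    field_simp
    ring
  rw [tsum_congr key]
  have h1 := summable_tel r s h
  have h2 := summable_shift_pow 2 r (by norm_num)
  have h3 := summable_shift_pow 3 r (by norm_num)
  have h4 := summable_shift_pow 2 s (by norm_num)
  rw [Summable.tsum_add (((h1.mul_left _).add (h2.mul_left _)).add (h3.mul_left _)) (h4.mul_left _),
      Summable.tsum_add ((h1.mul_left _).add (h2.mul_left _)) (h3.mul_left _),
      Summable.tsum_add (h1.mul_left _) (h2.mul_left _),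
      tsum_mul_left, tsum_mul_left, tsum_mul_left, tsum_mul_left,
      tsum_tel r s h, tsum_shift_pow 2 r (by norm_num), tsum_shift_pow 3 r (by norm_num),
      tsum_shift_pow 2 s (by norm_num)]
  ring
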